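/- Let G be a group and N ∈ ℕ, and suppose every element of the derived subgroup [G,G] is a product of at most N commutators (the commutator width of G is at most N). Then every element of the subgroup G² generated by all squares is a product of at most 3N+1 squares. In particular, a group of finite commutator width has finite square width. -/

import Mathlib

variable {G : Type*} [Group G]

open scoped commutatorElement

/-- `g` is a product of `n` commutators. -/
def IsProdOfCommutators (g : G) (n : ℕ) : Prop :=
  ∃ x y : Fin n → G, g = (List.ofFn fun i => ⁅x i, y i⁆).prod

/-- `g` is a product of `n` squares. -/
def IsProdOfSquares (g : G) (n : ℕ) : Prop :=
  ∃ x : Fin n → G, g = (List.ofFn fun i => x i ^ 2).prod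

/-- A product of `n` commutators is a product of `3n` squares, in list form. -/
lemma comm_prod_as_squares : ∀ (n : ℕ) (x y : Fin n → G),
    ∃ l : List G, l.length = 3 * n ∧
      (List.ofFn fun i => ⁅x i, y i⁆).prod = (l.map (· ^ 2)).prod := by
  intro n
  induction n with
  | zero => intro x y; exact ⟨[], by simp, by simp⟩
  | succ m ih =>
    intro x y
    obtain ⟨l, hl, hp⟩ := ih (fun i => x i.succ) (fun i => y i.succ)
    refine ⟨x 0 :: ((x 0)⁻¹ * y 0) :: (y 0)⁻¹ :: l, by simp [hl]; ring, ?_⟩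
    rw [List.ofFn_succ, List.prod_cons, hp]
    simp only [List.map_cons, List.prod_cons]
    rw [commutatorElement_def]
    simp only [pow_two]
    group

/-- `IsProdOfSquares` from a list of squares. -/
lemma isProdOfSquares_of_list (g : G) (n : ℕ) (l : List G) (hl : l.length = n)
    (hg : g = (l.map (· ^ 2)).prod) : IsProdOfSquares g n := by
  subst hl
  refine ⟨l.get, ?_⟩
  conv_lhs => rw [hg]
  congr 1
  conv_lhs => rw [← List.ofFn_get l]
  rw [List.map_ofFn]
  rfl

theorem statement14 {G : Type*} [Group G] (N : ℕ)
    (h : ∀ g ∈ commutator G, ∃ n ≤ N, IsProdOfCommutators g n) :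
    ∀ g ∈ Subgroup.closure {x : G | ∃ y : G, x = y ^ 2},
      ∃ n ≤ 3 * N + 1, IsProdOfSquares g n := by
  intro g hg
  set φ : G →* Abelianization G := QuotientGroup.mk' (commutator G) with hφ
  -- the image of g in the abelianization is a square
  have himg : φ g ∈ ((powMonoidHom 2 : Abelianization G →* Abelianization G)).range := by
    have h1 : φ g ∈ Subgroup.map φ (Subgroup.closure {x : G | ∃ y : G, x = y ^ 2}) :=
      Subgroup.mem_map_of_mem φ hg
    rw [MonoidHom.map_closure] at h1
    have h2 : Subgroup.closure (φ '' {x : G | ∃ y : G, x = y ^ 2}) ≤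
        (powMonoidHom 2 : Abelianization G →* Abelianization G).range := by
      rw [Subgroup.closure_le]
      rintro _ ⟨x, ⟨y, rfl⟩, rfl⟩
      exact ⟨φ y, by simp [powMonoidHom]⟩
    exact h2 h1
  obtain ⟨b, hb⟩ := himg
  obtain ⟨a, rfl⟩ := QuotientGroup.mk'_surjective (commutator G) b
  -- c := (a^2)⁻¹ * g lies in the commutator subgroup
  have hc : (a ^ 2)⁻¹ * g ∈ commutator G := by
    rw [← QuotientGroup.ker_mk' (commutator G), MonoidHom.mem_ker]
    have : φ (a ^ 2) = φ g := (map_pow φ a 2).trans hb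
    show φ ((a ^ 2)⁻¹ * g) = 1
    rw [map_mul, map_inv, this, inv_mul_cancel]
  obtain ⟨n, hn, x, y, hxy⟩ := h _ hc
  obtain ⟨l, hl, hp⟩ := comm_prod_as_squares n x y
  refine ⟨3 * n + 1, by omega, ?_⟩
  refine isProdOfSquares_of_list g (3 * n + 1) (a :: l) (by simp [hl]) ?_
  have : g = a ^ 2 * ((a ^ 2)⁻¹ * g) := by group
  rw [this, hxy, hp]
  simp
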